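/- For every i ∈ I, the set S_i satisfies the recursion S_i = {x_i} ∪ ⋃_{j∈I} ⋃_{m∈E_{ji}} [x_i, S_j + m], where S_j + m denotes the translate of S_j by m and [x, S] = {t·x + (1−t)·y : y ∈ S, t ∈ [0,1]}. -/

import Mathlib

open scoped BigOperators
open MeasureTheory

noncomputable section

/-- `ℤ^n`, the exponent lattice. -/
abbrev Zn (n : ℕ) : Type := Fin n → ℤ

/-- `ℝ^n`. -/
abbrev Rn (n : ℕ) : Type := Fin n → ℝ

/-- The Laurent polynomial ring `R_n = ℂ[z_1^{±1},…,z_n^{±1}]`, realized as the group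
algebra of `ℤ^n` over `ℂ`. -/
abbrev LaurentRing (n : ℕ) : Type := AddMonoidAlgebra ℂ (Zn n)

/-- The embedding `ℤ^n → ℝ^n`. -/
def zToR {n : ℕ} (m : Zn n) : Rn n := fun j => (m j : ℝ)

/-- A bounded based sequence `F^•` of finite-rank free `R_n`-modules: a finite index set
`I = ⊔_k I_k` (with `I_k = ∅` for `k > 0` and `I_0 ≠ ∅`), recorded via a degree function,
together with the matrix entries `d^k_{ij} ∈ R_n` of the maps `F^k → F^{k+1}`. -/
structure BasedSeq (n : ℕ) where
  I : Type
  fintypeI : Fintype I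
  deg : I → ℤ
  deg_nonpos : ∀ i, deg i ≤ 0
  exists_deg_zero : ∃ i, deg i = 0
  d : I → I → LaurentRing n
  d_eq_zero : ∀ i j, deg i ≠ deg j + 1 → d i j = 0

attribute [instance] BasedSeq.fintypeI

/-- Chains witnessing membership in `E_{ij}`: `EChain F i j m` holds iff there is a chain
`j = i_0, i_1, …, i_k = i` with `deg i_ℓ = deg i_{ℓ-1} + 1` at each step, exponents
`m_ℓ` in the support of the corresponding matrix entry, and `m = m_1 + ⋯ + m_k`. -/
inductive EChain {n : ℕ} (F : BasedSeq n) : F.I → F.I → Zn n → Prop where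
  | base {i j : F.I} {m : Zn n} :
      F.deg i = F.deg j + 1 → m ∈ (F.d i j).coeff.support → EChain F i j m
  | step {i j k : F.I} {m m' : Zn n} :
      EChain F j k m → F.deg i = F.deg j + 1 → m' ∈ (F.d i j).coeff.support →
      EChain F i k (m + m')

/-- The subset `E_{ij} ⊆ ℤ^n`. -/
def Eset {n : ℕ} (F : BasedSeq n) (i j : F.I) : Set (Zn n) := {m | EChain F i j m}

/-- The condition `(m_1, …, m_k) ∈ E_{i_1 i_0} × ⋯ × E_{i_k i_{k-1}}`. -/
def goodTuple {n : ℕ} (F : BasedSeq n) {k : ℕ} (c : Fin (k + 1) → F.I)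
    (m : Fin k → Zn n) : Prop :=
  ∀ ℓ : Fin k, m ℓ ∈ Eset F (c ℓ.succ) (c ℓ.castSucc)

/-- The vertex tuple `(x_{i_0}, x_{i_1}+m_1, …, x_{i_k}+m_1+⋯+m_k)` in `ℝ^n`. -/
def vtx {n : ℕ} (F : BasedSeq n) (x : F.I → Rn n) {k : ℕ}
    (c : Fin (k + 1) → F.I) (m : Fin k → Zn n) : Fin (k + 1) → Rn n :=
  fun a => x (c a) + zToR (∑ ℓ ∈ Finset.univ.filter (fun ℓ : Fin k => (ℓ : ℕ) < (a : ℕ)), m ℓ)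

/-- Membership in `X(F^•)_k`: the tuple `y` represents (mod a common `ℤ^n`-translation `t`)
one of the linear `k`-simplices `[x_{i_0}, x_{i_1}+m_1, …, x_{i_k}+m_1+⋯+m_k] mod ℤ^n`. -/
def InX {n : ℕ} (F : BasedSeq n) (x : F.I → Rn n) (k : ℕ)
    (y : Fin (k + 1) → Rn n) : Prop :=
  ∃ (c : Fin (k + 1) → F.I) (m : Fin k → Zn n) (t : Zn n),
    goodTuple F c m ∧ ∀ a, y a = vtx F x c m a + zToR t

/-- The integer lattice `ℤ^n ⊆ ℝ^n` as an additive subgroup. -/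
def intLattice (n : ℕ) : AddSubgroup (Rn n) :=
  AddSubgroup.pi Set.univ fun _ => AddSubgroup.zmultiples (1 : ℝ)

/-- The torus `T^n = ℝ^n/ℤ^n`. -/
abbrev Torus (n : ℕ) := Rn n ⧸ intLattice n

/-- The projection `π : ℝ^n → T^n`. -/
def toTorus {n : ℕ} : Rn n → Torus n := QuotientAddGroup.mk

/-- The tropical Lagrangian coamoeba `T(F^•) ⊆ T^n`. -/
def TropT {n : ℕ} (F : BasedSeq n) (x : F.I → Rn n) : Set (Torus n) :=
  ⋃ (k : ℕ), ⋃ (c : Fin (k + 1) → F.I), ⋃ (m : Fin k → Zn n), ⋃ (_ : goodTuple F c m),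
    toTorus '' convexHull ℝ (Set.range (vtx F x c m))

/-- The subset `S_i ⊆ ℝ^n`. -/
def Sset {n : ℕ} (F : BasedSeq n) (x : F.I → Rn n) (i : F.I) : Set (Rn n) :=
  ⋃ (k : ℕ), ⋃ (c : Fin (k + 1) → F.I), ⋃ (m : Fin k → Zn n),
    ⋃ (_ : c 0 = i ∧ goodTuple F c m), convexHull ℝ (Set.range (vtx F x c m))

/-- `[x, S] = {t·x + (1−t)·y : y ∈ S, t ∈ [0,1]}`. -/
def joinSet {n : ℕ} (x : Rn n) (S : Set (Rn n)) : Set (Rn n) :=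
  {p | ∃ y ∈ S, ∃ t ∈ Set.Icc (0 : ℝ) 1, p = t • x + (1 - t) • y}


section Aux

open scoped Pointwise

variable {n : ℕ}

lemma zToR_add (a b : Zn n) : zToR (a + b) = zToR a + zToR b := by
  funext j; simp [zToR]

lemma zToR_zero : zToR (0 : Zn n) = 0 := by
  funext j; simp [zToR]

lemma vtx_zero (F : BasedSeq n) (x : F.I → Rn n) {k : ℕ} (c : Fin (k + 1) → F.I)
    (m : Fin k → Zn n) : vtx F x c m 0 = x (c 0) := by
  simp [vtx, zToR_zero]

lemma vtx_succ (F : BasedSeq n) (x : F.I → Rn n) {k : ℕ} (c : Fin (k + 2) → F.I)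
    (m : Fin (k + 1) → Zn n) (a : Fin (k + 1)) :
    vtx F x c m a.succ = vtx F x (Fin.tail c) (Fin.tail m) a + zToR (m 0) := by
  unfold vtx
  have hsum : ∑ ℓ ∈ Finset.univ.filter (fun ℓ : Fin (k+1) => (ℓ : ℕ) < ((a.succ : Fin (k+2)) : ℕ)), m ℓ
      = m 0 + ∑ ℓ ∈ Finset.univ.filter (fun ℓ : Fin k => (ℓ : ℕ) < (a : ℕ)), Fin.tail m ℓ := by
    rw [Finset.sum_filter, Finset.sum_filter, Fin.sum_univ_succ]
    simp [Fin.tail, Nat.succ_lt_succ_iff]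
  rw [hsum, zToR_add]
  show x (c a.succ) + _ = x (c a.succ) + _ + _
  abel

lemma goodTuple_iff (F : BasedSeq n) {k : ℕ} (c : Fin (k + 2) → F.I)
    (m : Fin (k + 1) → Zn n) :
    goodTuple F c m ↔ m 0 ∈ Eset F (c 1) (c 0) ∧ goodTuple F (Fin.tail c) (Fin.tail m) := by
  constructor
  · intro h
    refine ⟨?_, ?_⟩
    · have := h 0
      simpa [Fin.succ_zero_eq_one] using this
    · intro a
      have := h a.succ
      simpa [goodTuple, Fin.tail, ← Fin.succ_castSucc] using this
  · rintro ⟨h0, h⟩ ℓ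
    refine Fin.cases ?_ ?_ ℓ
    · simpa [Fin.succ_zero_eq_one] using h0
    · intro a
      have := h a
      simpa [goodTuple, Fin.tail, ← Fin.succ_castSucc] using this

lemma range_vtx (F : BasedSeq n) (x : F.I → Rn n) {k : ℕ} (c : Fin (k + 2) → F.I)
    (m : Fin (k + 1) → Zn n) :
    Set.range (vtx F x c m)
      = insert (x (c 0))
          ((fun y => y + zToR (m 0)) '' Set.range (vtx F x (Fin.tail c) (Fin.tail m))) := by
  rw [Fin.range_fin_succ]
  congr 1
  · exact vtx_zero F x c m
  · have : Fin.tail (vtx F x c m)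
        = (fun y => y + zToR (m 0)) ∘ (vtx F x (Fin.tail c) (Fin.tail m)) := by
      funext a
      exact vtx_succ F x c m a
    rw [this, Set.range_comp]

lemma hull_translate (v : Rn n) (s : Set (Rn n)) :
    convexHull ℝ ((fun y => y + v) '' s) = (fun y => y + v) '' convexHull ℝ s := by
  have himg : ∀ t : Set (Rn n), (fun y => y + v) '' t = v +ᵥ t := by
    intro t
    ext z
    simp only [Set.mem_image, Set.mem_vadd_set, vadd_eq_add]
    constructor
    · rintro ⟨y, hy, rfl⟩; exact ⟨y, hy, add_comm v y⟩
    · rintro ⟨y, hy, rfl⟩; exact ⟨y, hy, add_comm y v⟩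
  rw [himg, himg, convexHull_vadd]

lemma mem_Sset (F : BasedSeq n) (x : F.I → Rn n) {k : ℕ} (c : Fin (k + 1) → F.I)
    (m : Fin k → Zn n) (hg : goodTuple F c m) {p : Rn n}
    (hp : p ∈ convexHull ℝ (Set.range (vtx F x c m))) : p ∈ Sset F x (c 0) := by
  unfold Sset
  simp only [Set.mem_iUnion]
  exact ⟨k, c, m, ⟨rfl, hg⟩, hp⟩

lemma xi_mem_Sset (F : BasedSeq n) (x : F.I → Rn n) (i : F.I) : x i ∈ Sset F x i := by
  have hg : goodTuple F (fun _ : Fin 1 => i) (fun a : Fin 0 => a.elim0) := fun ℓ => ℓ.elim0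
  have := mem_Sset F x (fun _ : Fin 1 => i) (fun a : Fin 0 => a.elim0) hg
    (p := x i) ?_
  · exact this
  · refine subset_convexHull ℝ _ ⟨0, ?_⟩
    simp [vtx, zToR_zero]

end Aux

/-- the recursion `S_i = {x_i} ∪ ⋃_{j} ⋃_{m ∈ E_{ji}} [x_i, S_j + m]`. -/
theorem stmt8 (n : ℕ) (hn : 1 ≤ n) (F : BasedSeq n) (x : F.I → Rn n) (i : F.I) :
    Sset F x i = {x i} ∪ ⋃ (j : F.I), ⋃ m ∈ Eset F j i,
      joinSet (x i) ((fun y => y + zToR m) '' Sset F x j) := by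
  ext p
  simp only [Set.mem_union, Set.mem_singleton_iff, Set.mem_iUnion, Set.mem_setOf_eq]
  constructor
  · -- forward direction
    intro hp
    rw [Sset] at hp
    simp only [Set.mem_iUnion] at hp
    obtain ⟨k, c, m, ⟨hc0, hg⟩, hp⟩ := hp
    cases k with
    | zero =>
      left
      have hr : Set.range (vtx F x c m) = {x i} := by
        have h0 : vtx F x c m 0 = x i := by rw [vtx_zero, hc0]
        ext z
        constructor
        · rintro ⟨a, rfl⟩
          have ha : a = 0 := by omega
          rw [ha, h0]; rfl
        · rintro rfl
          exact ⟨0, h0⟩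
      rw [hr, convexHull_singleton] at hp
      exact hp
    | succ k =>
      right
      obtain ⟨hE, hgt⟩ := (goodTuple_iff F c m).1 hg
      rw [range_vtx, hc0] at hp
      have hne : ((fun y => y + zToR (m 0)) ''
          Set.range (vtx F x (Fin.tail c) (Fin.tail m))).Nonempty :=
        (Set.range_nonempty _).image _
      rw [convexHull_insert hne, mem_convexJoin] at hp
      obtain ⟨a, ha, b, hb, hseg⟩ := hp
      rw [Set.mem_singleton_iff] at ha
      subst ha
      rw [hull_translate] at hb
      obtain ⟨y, hy, rfl⟩ := hb
      obtain ⟨t1, t2, ht1, ht2, hsum, hpt⟩ := hseg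
      refine ⟨c 1, m 0, ?_, ?_⟩
      · rw [← hc0]; exact hE
      · refine ⟨y + zToR (m 0), ⟨y, ?_, rfl⟩, t1, ⟨ht1, by linarith⟩, ?_⟩
        · have := mem_Sset F x (Fin.tail c) (Fin.tail m) hgt hy
          have h0 : Fin.tail c 0 = c 1 := by
            rw [Fin.tail, Fin.succ_zero_eq_one]
          rwa [h0] at this
        · rw [← hpt]
          have : t2 = 1 - t1 := by linarith
          rw [this]
  · -- reverse direction
    rintro (rfl | ⟨j, mE, hmE, hjoin⟩)
    · exact xi_mem_Sset F x i
    · obtain ⟨yy, ⟨y, hy, rfl⟩, t, ht, rfl⟩ := hjoin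
      rw [Sset] at hy
      simp only [Set.mem_iUnion] at hy
      obtain ⟨k, c, mm, ⟨hc0, hg⟩, hy⟩ := hy
      set c' : Fin (k + 2) → F.I := Fin.cons i c with hc'
      set m' : Fin (k + 1) → Zn n := Fin.cons mE mm with hm'
      have hgt : goodTuple F c' m' := by
        rw [goodTuple_iff]
        constructor
        · show m' 0 ∈ Eset F (c' 1) (c' 0)
          have h1 : c' 1 = c 0 := by
            rw [hc', ← Fin.succ_zero_eq_one, Fin.cons_succ]
          have h0 : c' 0 = i := by rw [hc', Fin.cons_zero]
          have hm0 : m' 0 = mE := by rw [hm', Fin.cons_zero]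
          rw [h1, h0, hm0, hc0]
          exact hmE
        · rw [hc', hm', Fin.tail_cons, Fin.tail_cons]
          exact hg
      have hmem : t • x i + (1 - t) • (y + zToR mE)
          ∈ convexHull ℝ (Set.range (vtx F x c' m')) := by
        rw [range_vtx]
        have h0 : c' 0 = i := by rw [hc', Fin.cons_zero]
        have hm0 : m' 0 = mE := by rw [hm', Fin.cons_zero]
        have htails : Fin.tail c' = c := by rw [hc', Fin.tail_cons]
        have htailm : Fin.tail m' = mm := by rw [hm', Fin.tail_cons]
        rw [h0, hm0, htails, htailm]
        have hx : x i ∈ convexHull ℝ (insert (x i)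
            ((fun y => y + zToR mE) '' Set.range (vtx F x c mm))) :=
          subset_convexHull ℝ _ (Set.mem_insert _ _)
        have hy' : y + zToR mE ∈ convexHull ℝ (insert (x i)
            ((fun y => y + zToR mE) '' Set.range (vtx F x c mm))) := by
          apply convexHull_mono (Set.subset_insert _ _)
          rw [hull_translate]
          exact ⟨y, hy, rfl⟩
        exact (convex_convexHull ℝ _) hx hy' ht.1 (by linarith [ht.2]) (by ring)
      have := mem_Sset F x c' m' hgt hmem
      have h0 : c' 0 = i := by rw [hc', Fin.cons_zero]
      rwa [h0] at this

end
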